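/- Under the assumptions of the barycenter W₂ bound, define the back-mapped reward r̄ = Z(r*)·p̄ − σ1, where p̄ is the barycenter and Z(r*) = 1ᵀ(r* + σ1). Then ‖r̄ − r*‖₂ ≤ (2√2 · D · Z(r*))/(δ √Z_min) · (Σ_i α_i ε_i)^{1/2}, where δ is the minimum nonzero distance of the finite metric space. -/

import Mathlib

open Finset

def IsProb {X : Type*} [Fintype X] (p : X → ℝ) : Prop :=
  (∀ x, 0 ≤ p x) ∧ ∑ x, p x = 1

def IsCoupling {X : Type*} [Fintype X] (γ : X → X → ℝ) (μ ν : X → ℝ) : Prop :=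
  (∀ x y, 0 ≤ γ x y) ∧ (∀ x, ∑ y, γ x y = μ x) ∧ (∀ y, ∑ x, γ x y = ν y)

/-- Squared 2-Wasserstein distance on a finite metric space. -/
noncomputable def W2sq {X : Type*} [Fintype X] [MetricSpace X] (μ ν : X → ℝ) : ℝ :=
  sInf {c | ∃ γ, IsCoupling γ μ ν ∧ c = ∑ x, ∑ y, dist x y ^ 2 * γ x y}

/-- 2-Wasserstein distance. -/
noncomputable def W2 {X : Type*} [Fintype X] [MetricSpace X] (μ ν : X → ℝ) : ℝ :=
  Real.sqrt (W2sq μ ν)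

/-- Normalization constant `Z(r) = 1ᵀ(r + σ1)`. -/
def Znorm {X : Type*} [Fintype X] (σ : ℝ) (r : X → ℝ) : ℝ := ∑ x, (r x + σ)

/-- Shift-and-normalize map `T_σ(r) = (r + σ1)/Z(r)`. -/
noncomputable def Tshift {X : Type*} [Fintype X] (σ : ℝ) (r : X → ℝ) : X → ℝ :=
  fun x => (r x + σ) / Znorm σ r

/-- ℓ¹ norm of a vector on a finite index type. -/
def l1 {X : Type*} [Fintype X] (v : X → ℝ) : ℝ := ∑ x, |v x|

/-- ℓ² norm of a vector on a finite index type. -/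
noncomputable def l2 {X : Type*} [Fintype X] (v : X → ℝ) : ℝ := Real.sqrt (∑ x, (v x) ^ 2)

section Aux
open scoped Classical

variable {X : Type*} [Fintype X] [MetricSpace X]

omit [MetricSpace X] in
lemma l1_nonneg (v : X → ℝ) : 0 ≤ l1 v :=
  Finset.sum_nonneg fun _ _ => abs_nonneg _

lemma w2sq_bddBelow (μ ν : X → ℝ) :
    BddBelow {c | ∃ γ, IsCoupling γ μ ν ∧ c = ∑ x, ∑ y, dist x y ^ 2 * γ x y} := by
  refine ⟨0, fun c hc => ?_⟩
  obtain ⟨γ, hγ, rfl⟩ := hc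
  exact Finset.sum_nonneg fun x _ => Finset.sum_nonneg fun y _ =>
    mul_nonneg (sq_nonneg _) (hγ.1 x y)

/-- Upper bound on W2sq via the TV coupling. -/
lemma w2sq_le (μ ν : X → ℝ) (hμ : IsProb μ) (hν : IsProb ν) (D : ℝ)
    (hD : ∀ x y : X, dist x y ≤ D) :
    W2sq μ ν ≤ D ^ 2 * (l1 (fun x => μ x - ν x) / 2) := by
  set m : X → ℝ := fun x => min (μ x) (ν x) with hm
  set t : ℝ := l1 (fun x => μ x - ν x) / 2 with ht
  have habs : ∀ x, |μ x - ν x| = μ x + ν x - 2 * m x := by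
    intro x
    rcases le_total (μ x) (ν x) with h | h
    · rw [abs_of_nonpos (by linarith), hm]; simp [min_eq_left h]; ring
    · rw [abs_of_nonneg (by linarith), hm]; simp [min_eq_right h]; ring
  have hl1 : l1 (fun x => μ x - ν x) = 2 - 2 * ∑ x, m x := by
    simp only [l1, habs, Finset.sum_sub_distrib, Finset.sum_add_distrib, hμ.2, hν.2,
      ← Finset.mul_sum]
    ring
  have hsumμ : ∑ x, (μ x - m x) = t := by
    rw [Finset.sum_sub_distrib, hμ.2, ht, hl1]; ring
  have hsumν : ∑ x, (ν x - m x) = t := by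
    rw [Finset.sum_sub_distrib, hν.2, ht, hl1]; ring
  have ht0 : 0 ≤ t := div_nonneg (l1_nonneg _) (by norm_num)
  have hμm : ∀ x, 0 ≤ μ x - m x := fun x => by simp [hm, min_le_left]
  have hνm : ∀ x, 0 ≤ ν x - m x := fun x => by simp [hm, min_le_right]
  have hm0 : ∀ x, 0 ≤ m x := fun x => le_min (hμ.1 x) (hν.1 x)
  rcases eq_or_lt_of_le ht0 with ht0' | ht0'
  · -- t = 0, so μ = ν : diagonal coupling, cost 0
    have hμν : ∀ x, μ x = ν x := by
      intro x
      have h1 : ∑ x, |μ x - ν x| = 0 := by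
        have h2 : l1 (fun x => μ x - ν x) = 0 := by
          have := ht0'.symm
          rw [ht] at this
          linarith
        simpa [l1] using h2
      have := (Finset.sum_eq_zero_iff_of_nonneg (fun x _ => abs_nonneg (μ x - ν x))).1 h1
        x (Finset.mem_univ x)
      have := abs_eq_zero.1 this
      linarith
    have hmem : (0:ℝ) ∈ {c | ∃ γ, IsCoupling γ μ ν ∧
        c = ∑ x, ∑ y, dist x y ^ 2 * γ x y} := by
      refine ⟨fun x y => if x = y then μ x else 0, ⟨?_, ?_, ?_⟩, ?_⟩
      · intro x y; simp only; split <;> simp [hμ.1 x]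
      · intro x; simp
      · intro y; simp only; rw [Finset.sum_ite_eq']; simp [hμν y]
      · symm
        rw [Finset.sum_eq_zero]
        intro x _
        rw [Finset.sum_eq_zero]
        intro y _
        rcases eq_or_ne x y with rfl | h
        · simp
        · simp [h]
    exact le_trans (csInf_le (w2sq_bddBelow μ ν) hmem) (mul_nonneg (sq_nonneg D) ht0)
  · -- t > 0 : TV coupling
    set γ : X → X → ℝ := fun x y =>
      (if x = y then m x else 0) + (μ x - m x) * (ν y - m y) / t with hγ
    have hcoup : IsCoupling γ μ ν := by
      refine ⟨fun x y => ?_, fun x => ?_, fun y => ?_⟩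
      · have h0 : 0 ≤ (μ x - m x) * (ν y - m y) / t :=
          div_nonneg (mul_nonneg (hμm x) (hνm y)) ht0
        simp only [hγ]
        split <;> [exact add_nonneg (hm0 x) h0; simpa]
      · simp only [hγ, Finset.sum_add_distrib, Finset.sum_ite_eq Finset.univ x,
          Finset.mem_univ, if_true]
        rw [show (∑ y, (μ x - m x) * (ν y - m y) / t)
            = (μ x - m x) / t * ∑ y, (ν y - m y) from by
          rw [Finset.mul_sum]; exact Finset.sum_congr rfl fun y _ => by ring]
        rw [hsumν]
        field_simp
        ring
      · simp only [hγ, Finset.sum_add_distrib, Finset.sum_ite_eq' Finset.univ y,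
          Finset.mem_univ, if_true]
        rw [show (∑ x, (μ x - m x) * (ν y - m y) / t)
            = (ν y - m y) / t * ∑ x, (μ x - m x) from by
          rw [Finset.mul_sum]; exact Finset.sum_congr rfl fun x _ => by ring]
        rw [hsumμ]
        field_simp
        ring
    refine le_trans (csInf_le (w2sq_bddBelow μ ν) ⟨γ, hcoup, rfl⟩) ?_
    have key : ∑ x, ∑ y, dist x y ^ 2 * γ x y
        ≤ ∑ x, ∑ y, D ^ 2 * ((μ x - m x) * (ν y - m y) / t) := by
      refine Finset.sum_le_sum fun x _ => Finset.sum_le_sum fun y _ => ?_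
      rcases eq_or_ne x y with rfl | h
      · simp only [dist_self]
        have h1 : (0:ℝ) ^ 2 * γ x x = 0 := by ring
        rw [h1]
        exact mul_nonneg (sq_nonneg D) (div_nonneg (mul_nonneg (hμm x) (hνm x)) ht0)
      · simp only [hγ, if_neg h, zero_add]
        refine mul_le_mul_of_nonneg_right ?_
          (div_nonneg (mul_nonneg (hμm x) (hνm y)) ht0)
        exact pow_le_pow_left₀ dist_nonneg (hD x y) 2
    refine key.trans ?_
    have hinner : ∀ x : X, ∑ y, D ^ 2 * ((μ x - m x) * (ν y - m y) / t)
        = D ^ 2 * (μ x - m x) := by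
      intro x
      rw [show (∑ y, D ^ 2 * ((μ x - m x) * (ν y - m y) / t))
          = D ^ 2 * (μ x - m x) / t * ∑ y, (ν y - m y) from by
        rw [Finset.mul_sum]; exact Finset.sum_congr rfl fun y _ => by ring]
      rw [hsumν]
      field_simp
    rw [Finset.sum_congr rfl fun x _ => hinner x, ← Finset.mul_sum, hsumμ]

/-- The set of couplings is nonempty (product coupling). -/
lemma coupling_set_nonempty (μ ν : X → ℝ) (hμ : IsProb μ) (hν : IsProb ν) :
    Set.Nonempty {c | ∃ γ, IsCoupling γ μ ν ∧ c = ∑ x, ∑ y, dist x y ^ 2 * γ x y} := by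
  refine ⟨_, fun x y => μ x * ν y, ⟨?_, ?_, ?_⟩, rfl⟩
  · intro x y; exact mul_nonneg (hμ.1 x) (hν.1 y)
  · intro x; rw [← Finset.mul_sum, hν.2, mul_one]
  · intro y; rw [← Finset.sum_mul, hμ.2, one_mul]

/-- Lower bound on W2sq. -/
lemma w2sq_ge (μ ν : X → ℝ) (hμ : IsProb μ) (hν : IsProb ν) (δ : ℝ) (hδ0 : 0 ≤ δ)
    (hδmin : ∀ x y : X, x ≠ y → δ ≤ dist x y) :
    δ ^ 2 * (l1 (fun x => μ x - ν x) / 2) ≤ W2sq μ ν := by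
  refine le_csInf (coupling_set_nonempty μ ν hμ hν) ?_
  rintro c ⟨γ, hγ, rfl⟩
  set off : X → X → ℝ := fun x y => if x = y then 0 else γ x y with hoff
  have hoff0 : ∀ x y, 0 ≤ off x y := by
    intro x y
    simp only [hoff]
    split
    · exact le_refl 0
    · exact hγ.1 x y
  have step1 : ∑ x, ∑ y, δ ^ 2 * off x y ≤ ∑ x, ∑ y, dist x y ^ 2 * γ x y := by
    refine Finset.sum_le_sum fun x _ => Finset.sum_le_sum fun y _ => ?_
    rcases eq_or_ne x y with rfl | h
    · simp [hoff]
    · simp only [hoff, if_neg h]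
      exact mul_le_mul_of_nonneg_right
        (pow_le_pow_left₀ hδ0 (hδmin x y h) 2) (hγ.1 x y)
  refine le_trans ?_ step1
  simp only [← Finset.mul_sum]
  rw [mul_comm (δ^2), mul_comm (δ^2)]
  refine mul_le_mul_of_nonneg_right ?_ (sq_nonneg δ)
  -- l1 / 2 ≤ ∑∑ off
  have hsplit : ∀ x, ∑ y, γ x y = γ x x + ∑ y, off x y := by
    intro x
    have h1 : ∀ y, γ x y = (if x = y then γ x x else 0) + off x y := by
      intro y
      rcases eq_or_ne x y with rfl | h
      · simp [hoff]
      · simp [hoff, if_neg h]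
    rw [Finset.sum_congr rfl fun y _ => h1 y, Finset.sum_add_distrib,
      Finset.sum_ite_eq Finset.univ x, if_pos (Finset.mem_univ x)]
  have hrow : ∀ x, ∑ y, off x y = μ x - γ x x := by
    intro x
    have := hγ.2.1 x
    rw [hsplit x] at this
    linarith
  have hsplit' : ∀ y, ∑ x, γ x y = γ y y + ∑ x, off x y := by
    intro y
    have h1 : ∀ x, γ x y = (if x = y then γ y y else 0) + off x y := by
      intro x
      rcases eq_or_ne x y with rfl | h
      · simp [hoff]
      · simp [hoff, if_neg h]
    rw [Finset.sum_congr rfl fun x _ => h1 x, Finset.sum_add_distrib,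
      Finset.sum_ite_eq' Finset.univ y, if_pos (Finset.mem_univ y)]
  have hcol : ∀ y, ∑ x, off x y = ν y - γ y y := by
    intro y
    have := hγ.2.2 y
    rw [hsplit' y] at this
    linarith
  have habs : ∀ x, |μ x - ν x| ≤ ∑ y, off x y + ∑ y, off y x := by
    intro x
    have h1 : μ x - ν x = ∑ y, off x y - ∑ y, off y x := by
      rw [hrow x, hcol x]; ring
    rw [h1]
    calc |∑ y, off x y - ∑ y, off y x| ≤ |∑ y, off x y| + |∑ y, off y x| := abs_sub _ _
      _ = ∑ y, off x y + ∑ y, off y x := by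
          rw [abs_of_nonneg (Finset.sum_nonneg fun y _ => hoff0 x y),
            abs_of_nonneg (Finset.sum_nonneg fun y _ => hoff0 y x)]
  have hsum : l1 (fun x => μ x - ν x) ≤ 2 * ∑ x, ∑ y, off x y := by
    calc l1 (fun x => μ x - ν x) ≤ ∑ x, (∑ y, off x y + ∑ y, off y x) :=
          Finset.sum_le_sum fun x _ => habs x
      _ = ∑ x, ∑ y, off x y + ∑ x, ∑ y, off y x := Finset.sum_add_distrib
      _ = 2 * ∑ x, ∑ y, off x y := by rw [Finset.sum_comm]; ring
  linarith

omit [MetricSpace X] in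
lemma tshift_isProb [Nonempty X] (σ : ℝ) (r : X → ℝ) (hr : ∀ x, 0 < r x + σ) :
    IsProb (Tshift σ r) := by
  have hZ : 0 < Znorm σ r :=
    Finset.sum_pos (fun x _ => hr x) Finset.univ_nonempty
  constructor
  · intro x; exact div_nonneg (hr x).le hZ.le
  · simp only [Tshift]
    rw [← Finset.sum_div, ← Znorm, div_self hZ.ne']

omit [MetricSpace X] in
/-- Lipschitz bound for the shift-and-normalize map in ℓ¹. -/
lemma tshift_lip (σ : ℝ) (r r' : X → ℝ) (Zmin : ℝ) (hZmin0 : 0 < Zmin)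
    (hZ : Zmin ≤ Znorm σ r) (hZ' : 0 < Znorm σ r') (hr' : ∀ x, 0 ≤ r' x + σ) :
    l1 (fun x => Tshift σ r x - Tshift σ r' x) ≤ 2 / Zmin * l1 (fun x => r x - r' x) := by
  set Z := Znorm σ r with hZdef
  set Z' := Znorm σ r' with hZ'def
  have hZ0 : 0 < Z := lt_of_lt_of_le hZmin0 hZ
  set L := l1 (fun x => r x - r' x) with hL
  have hZZ' : |Z - Z'| ≤ L := by
    have : Z - Z' = ∑ x, (r x - r' x) := by
      rw [hZdef, hZ'def, Znorm, Znorm, ← Finset.sum_sub_distrib]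
      exact Finset.sum_congr rfl fun x _ => by ring
    rw [this, hL, l1]
    exact Finset.abs_sum_le_sum_abs _ _
  have key : ∀ x, |Tshift σ r x - Tshift σ r' x|
      ≤ |r x - r' x| / Z + ((r' x + σ) / Z') * (|Z - Z'| / Z) := by
    intro x
    have heq : Tshift σ r x - Tshift σ r' x
        = (r x - r' x) / Z + ((r' x + σ) / Z') * ((Z' - Z) / Z) := by
      rw [Tshift, Tshift, ← hZdef, ← hZ'def]
      field_simp
      ring
    rw [heq]
    refine (abs_add_le _ _).trans ?_
    gcongr
    · rw [abs_div, abs_of_nonneg hZ0.le]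
    · rw [abs_mul, abs_div, abs_div, abs_of_nonneg (hr' x),
        abs_of_nonneg hZ'.le, abs_of_nonneg hZ0.le, abs_sub_comm]
  calc l1 (fun x => Tshift σ r x - Tshift σ r' x)
      ≤ ∑ x, (|r x - r' x| / Z + ((r' x + σ) / Z') * (|Z - Z'| / Z)) :=
        Finset.sum_le_sum fun x _ => key x
    _ = L / Z + (|Z - Z'| / Z) * ∑ x, (r' x + σ) / Z' := by
        rw [Finset.sum_add_distrib, ← Finset.sum_div, Finset.mul_sum]
        rw [show (∑ x, (r' x + σ) / Z' * (|Z - Z'| / Z))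
            = ∑ x, (|Z - Z'| / Z) * ((r' x + σ) / Z') from
          Finset.sum_congr rfl fun x _ => by ring, ← Finset.mul_sum, hL, l1]
    _ = L / Z + |Z - Z'| / Z := by
        rw [show (∑ x, (r' x + σ) / Z') = (∑ x, (r' x + σ)) / Z' from
          (Finset.sum_div _ _ _).symm, ← Znorm, ← hZ'def, div_self hZ'.ne', mul_one]
    _ ≤ L / Zmin + L / Zmin := by
        have hL0 : 0 ≤ L := hL ▸ l1_nonneg _
        have h1 : L / Z ≤ L / Zmin := by
          rw [div_le_div_iff₀ hZ0 hZmin0]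
          nlinarith
        have h2 : |Z - Z'| / Z ≤ L / Zmin :=
          le_trans ((div_le_div_iff_of_pos_right hZ0).mpr hZZ') h1
        exact add_le_add h1 h2
    _ = 2 / Zmin * L := by ring

end Aux

/-- reward-space error bound for the back-mapped barycentric reward
`r̄ = Z(r*)·p̄ − σ1`. -/
theorem stmt6 {X : Type*} [Fintype X] [MetricSpace X] {K : ℕ}
    (σ : ℝ) (hσ : 0 < σ)
    (rhat : Fin K → X → ℝ) (rstar : X → ℝ)
    (hrhat : ∀ i x, 0 < rhat i x + σ) (hrstar : ∀ x, 0 < rstar x + σ)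
    (ε : Fin K → ℝ) (hε : ∀ i, l1 (fun x => rhat i x - rstar x) ≤ ε i)
    (D : ℝ) (hD : ∀ x y : X, dist x y ≤ D) (hD0 : 0 ≤ D)
    (Zmin : ℝ) (hZmin0 : 0 < Zmin)
    (hZmin : ∀ i, Zmin ≤ Znorm σ (rhat i)) (hZmin' : Zmin ≤ Znorm σ rstar)
    (α : Fin K → ℝ) (hα : ∀ i, 0 ≤ α i) (hα1 : ∑ i, α i = 1)
    (δ : ℝ) (hδ : 0 < δ) (hδmin : ∀ x y : X, x ≠ y → δ ≤ dist x y)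
    (pbar : X → ℝ) (hpbar : IsProb pbar)
    (hbary : ∀ q : X → ℝ, IsProb q →
      ∑ i, α i * W2sq pbar (Tshift σ (rhat i)) ≤ ∑ i, α i * W2sq q (Tshift σ (rhat i))) :
    l2 (fun x => (Znorm σ rstar * pbar x - σ) - rstar x)
      ≤ (2 * Real.sqrt 2 * D * Znorm σ rstar) / (δ * Real.sqrt Zmin)
          * Real.sqrt (∑ i, α i * ε i) := by
  classical
  set S := ∑ i, α i * ε i with hS
  have hS0 : 0 ≤ S :=
    Finset.sum_nonneg fun i _ => mul_nonneg (hα i) ((l1_nonneg _).trans (hε i))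
  rcases isEmpty_or_nonempty X with hX | hX
  · -- empty case
    have h1 : l2 (fun x => (Znorm σ rstar * pbar x - σ) - rstar x) = 0 := by
      simp [l2, Finset.univ_eq_empty]
    have h2 : Znorm σ rstar = 0 := by simp [Znorm, Finset.univ_eq_empty]
    rw [h1, h2]
    have : (2 * Real.sqrt 2 * D * 0) / (δ * Real.sqrt Zmin) * Real.sqrt S = 0 := by
      simp
    rw [this]
  · -- nonempty case
    set ps := Tshift σ rstar with hps
    set Zs := Znorm σ rstar with hZsdef
    have hZs : 0 < Zs := Finset.sum_pos (fun x _ => hrstar x) Finset.univ_nonempty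
    have hpsP : IsProb ps := tshift_isProb σ rstar hrstar
    have hpiP : ∀ i, IsProb (Tshift σ (rhat i)) := fun i => tshift_isProb σ (rhat i) (hrhat i)
    -- Step 1: ℓ¹ Lipschitz bound
    have step1 : ∀ i, l1 (fun x => Tshift σ (rhat i) x - ps x) ≤ 2 / Zmin * ε i := by
      intro i
      refine (tshift_lip σ (rhat i) rstar Zmin hZmin0 (hZmin i) hZs
        (fun x => (hrstar x).le)).trans ?_
      exact mul_le_mul_of_nonneg_left (hε i) (by positivity)
    -- Step 2: W2sq upper bound on references
    have step2 : ∀ i, W2sq ps (Tshift σ (rhat i)) ≤ D ^ 2 * (ε i / Zmin) := by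
      intro i
      refine (w2sq_le ps (Tshift σ (rhat i)) hpsP (hpiP i) D hD).trans ?_
      have hsymm : l1 (fun x => ps x - Tshift σ (rhat i) x)
          = l1 (fun x => Tshift σ (rhat i) x - ps x) := by
        simp only [l1]
        exact Finset.sum_congr rfl fun x _ => (abs_sub_comm _ _)
      rw [hsymm]
      have h2 : 2 / Zmin * ε i = 2 * (ε i / Zmin) := by ring
      have h3 : l1 (fun x => Tshift σ (rhat i) x - ps x) / 2 ≤ ε i / Zmin := by
        have := step1 i
        linarith
      exact mul_le_mul_of_nonneg_left h3 (sq_nonneg D)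
    -- Step 3: barycenter optimality
    have step3 : ∑ i, α i * W2sq pbar (Tshift σ (rhat i)) ≤ D ^ 2 / Zmin * S := by
      refine (hbary ps hpsP).trans ?_
      calc ∑ i, α i * W2sq ps (Tshift σ (rhat i))
          ≤ ∑ i, α i * (D ^ 2 * (ε i / Zmin)) :=
            Finset.sum_le_sum fun i _ => mul_le_mul_of_nonneg_left (step2 i) (hα i)
        _ = D ^ 2 / Zmin * S := by
            rw [hS, Finset.mul_sum]
            exact Finset.sum_congr rfl fun i _ => by ring
    -- Step 4: W2sq lower bound for barycenter distances
    have step4 : ∀ i, l1 (fun x => pbar x - Tshift σ (rhat i) x)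
        ≤ 2 / δ ^ 2 * W2sq pbar (Tshift σ (rhat i)) := by
      intro i
      have := w2sq_ge pbar (Tshift σ (rhat i)) hpbar (hpiP i) δ hδ.le hδmin
      have hδ2 : (0:ℝ) < δ ^ 2 := by positivity
      rw [div_mul_eq_mul_div, le_div_iff₀ hδ2]
      nlinarith
    -- Step 5: triangle inequality and combination
    have htri : ∀ i, l1 (fun x => pbar x - ps x)
        ≤ l1 (fun x => pbar x - Tshift σ (rhat i) x)
          + l1 (fun x => Tshift σ (rhat i) x - ps x) := by
      intro i
      simp only [l1]
      rw [← Finset.sum_add_distrib]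
      refine Finset.sum_le_sum fun x _ => ?_
      calc |pbar x - ps x|
          = |(pbar x - Tshift σ (rhat i) x) + (Tshift σ (rhat i) x - ps x)| := by ring_nf
        _ ≤ _ := abs_add_le _ _
    have step5 : l1 (fun x => pbar x - ps x)
        ≤ 2 / δ ^ 2 * (D ^ 2 / Zmin * S) + 2 / Zmin * S := by
      calc l1 (fun x => pbar x - ps x)
          = ∑ i, α i * l1 (fun x => pbar x - ps x) := by
            rw [← Finset.sum_mul, hα1, one_mul]
        _ ≤ ∑ i, α i * (2 / δ ^ 2 * W2sq pbar (Tshift σ (rhat i)) + 2 / Zmin * ε i) :=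
            Finset.sum_le_sum fun i _ => mul_le_mul_of_nonneg_left
              ((htri i).trans (add_le_add (step4 i) (step1 i))) (hα i)
        _ = 2 / δ ^ 2 * ∑ i, α i * W2sq pbar (Tshift σ (rhat i)) + 2 / Zmin * S := by
            rw [hS, Finset.mul_sum, Finset.mul_sum, ← Finset.sum_add_distrib]
            exact Finset.sum_congr rfl fun i _ => by ring
        _ ≤ 2 / δ ^ 2 * (D ^ 2 / Zmin * S) + 2 / Zmin * S :=
            add_le_add (mul_le_mul_of_nonneg_left step3 (by positivity)) (le_refl _)
    -- Step 6: final ℓ¹ bound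
    have step6 : l1 (fun x => pbar x - ps x) ≤ 8 * D ^ 2 / (δ ^ 2 * Zmin) * S := by
      by_cases hcard : ∃ x y : X, x ≠ y
      · obtain ⟨x0, y0, hxy⟩ := hcard
        have hδD : δ ≤ D := (hδmin x0 y0 hxy).trans (hD x0 y0)
        have hd2 : δ ^ 2 ≤ D ^ 2 := by nlinarith
        set C := D ^ 2 / δ ^ 2 * (S / Zmin) with hC
        have hSZ0 : 0 ≤ S / Zmin := by positivity
        have h1 : (1:ℝ) ≤ D ^ 2 / δ ^ 2 := (one_le_div (by positivity)).mpr hd2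
        have hsz : S / Zmin ≤ C := by
          rw [hC]
          nlinarith
        have heq1 : 2 / δ ^ 2 * (D ^ 2 / Zmin * S) = 2 * C := by rw [hC]; ring
        have heq2 : 2 / Zmin * S = 2 * (S / Zmin) := by ring
        have heq3 : 8 * D ^ 2 / (δ ^ 2 * Zmin) * S = 8 * C := by rw [hC]; ring
        rw [heq3]
        calc l1 (fun x => pbar x - ps x) ≤ 2 * C + 2 * (S / Zmin) := by
              rw [← heq1, ← heq2]; exact step5
          _ ≤ 2 * C + 2 * C := by linarith
          _ ≤ 8 * C := by nlinarith [hSZ0.trans hsz]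
      · push_neg at hcard
        haveI : Subsingleton X := ⟨fun a b => hcard a b⟩
        have hone : ∀ (p : X → ℝ), IsProb p → ∀ x, p x = 1 := by
          intro p hp x
          have := hp.2
          rwa [Fintype.sum_subsingleton _ x] at this
        have h0 : l1 (fun x => pbar x - ps x) = 0 := by
          rw [l1, Finset.sum_eq_zero]
          intro x _
          rw [hone pbar hpbar x, hone ps hpsP x]
          simp
        rw [h0]
        exact mul_nonneg (by positivity) hS0
    -- Step 7: ℓ² ≤ sqrt ℓ¹
    have hple1 : ∀ x, pbar x ≤ 1 := by
      intro x
      have := Finset.single_le_sum (f := pbar) (fun y _ => hpbar.1 y) (Finset.mem_univ x)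
      rwa [hpbar.2] at this
    have hpsle1 : ∀ x, ps x ≤ 1 := by
      intro x
      have := Finset.single_le_sum (f := ps) (fun y _ => hpsP.1 y) (Finset.mem_univ x)
      rwa [hpsP.2] at this
    have step7 : ∑ x, (pbar x - ps x) ^ 2 ≤ l1 (fun x => pbar x - ps x) := by
      rw [l1]
      refine Finset.sum_le_sum fun x _ => ?_
      have h1 : |pbar x - ps x| ≤ 1 := by
        rw [abs_le]
        constructor
        · have := hpbar.1 x; have := hpsle1 x; linarith
        · have := hpsP.1 x; have := hple1 x; linarith
      calc (pbar x - ps x) ^ 2 = |pbar x - ps x| ^ 2 := (sq_abs _).symm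
        _ = |pbar x - ps x| * |pbar x - ps x| := pow_two _
        _ ≤ |pbar x - ps x| * 1 := mul_le_mul_of_nonneg_left h1 (abs_nonneg _)
        _ = |pbar x - ps x| := mul_one _
    -- Step 8: rewrite LHS as Zs * l2(pbar - ps)
    have hrw : ∀ x, (Zs * pbar x - σ) - rstar x = Zs * (pbar x - ps x) := by
      intro x
      rw [hps]
      simp only [Tshift, ← hZsdef]
      field_simp
      ring
    have hLHS : l2 (fun x => (Zs * pbar x - σ) - rstar x)
        = Zs * Real.sqrt (∑ x, (pbar x - ps x) ^ 2) := by
      rw [l2]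
      rw [show (∑ x, ((Zs * pbar x - σ) - rstar x) ^ 2)
          = Zs ^ 2 * ∑ x, (pbar x - ps x) ^ 2 from by
        rw [Finset.mul_sum]
        exact Finset.sum_congr rfl fun x _ => by rw [hrw x]; ring]
      rw [Real.sqrt_mul (sq_nonneg Zs), Real.sqrt_sq hZs.le]
    rw [hLHS]
    -- Combine
    have hfinal : Real.sqrt (∑ x, (pbar x - ps x) ^ 2)
        ≤ Real.sqrt (8 * D ^ 2 / (δ ^ 2 * Zmin) * S) :=
      Real.sqrt_le_sqrt (step7.trans step6)
    have hcoef : Real.sqrt (8 * D ^ 2 / (δ ^ 2 * Zmin) * S)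
        = (2 * Real.sqrt 2 * D) / (δ * Real.sqrt Zmin) * Real.sqrt S := by
      have h2 : (Real.sqrt 2) ^ 2 = 2 := Real.sq_sqrt (by norm_num)
      have hZm : (Real.sqrt Zmin) ^ 2 = Zmin := Real.sq_sqrt hZmin0.le
      have hc0 : 0 ≤ (2 * Real.sqrt 2 * D) / (δ * Real.sqrt Zmin) := by positivity
      have heq : 8 * D ^ 2 / (δ ^ 2 * Zmin) * S
          = ((2 * Real.sqrt 2 * D) / (δ * Real.sqrt Zmin)) ^ 2 * S := by
        rw [div_pow, mul_pow, mul_pow, h2, mul_pow, hZm]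
        ring
      rw [heq, Real.sqrt_mul (sq_nonneg _), Real.sqrt_sq hc0]
    calc Zs * Real.sqrt (∑ x, (pbar x - ps x) ^ 2)
        ≤ Zs * ((2 * Real.sqrt 2 * D) / (δ * Real.sqrt Zmin) * Real.sqrt S) := by
          rw [← hcoef]
          exact mul_le_mul_of_nonneg_left hfinal hZs.le
      _ = (2 * Real.sqrt 2 * D * Zs) / (δ * Real.sqrt Zmin) * Real.sqrt S := by ring
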